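/- Let c := ∑_{p prime} (log p)/(p(p−1)). Then log ρ_n = n·log n − (c + 1)·n + O(√n); that is, there is a constant M > 0 such that for all positive integers n, |log ρ_n − n·log n + (c + 1)·n| ≤ M·√n. -/

import Mathlib

/-- `ρ n := ∏_{p prime} p ^ ⌊n / p⌋` (only finitely many primes, those with `p ≤ n`,
have a nonzero exponent; `n / p` is natural division, i.e. `⌊n / p⌋`). -/
noncomputable def rho (n : ℕ) : ℕ := ∏ᶠ p ∈ {p : ℕ | p.Prime}, p ^ (n / p)

/-- The constant `c := ∑_{p prime} (log p) / (p (p - 1))` (a convergent series). -/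
noncomputable def cconst : ℝ :=
  ∑' p : {p : ℕ // p.Prime}, Real.log (p : ℕ) / (((p : ℕ) : ℝ) * (((p : ℕ) : ℝ) - 1))

open Finset Nat

-- Stirling-type bounds by induction
lemma log_fact_bounds : ∀ n : ℕ, 1 ≤ n →
    (n : ℝ) * Real.log n - n + 1 ≤ Real.log (n !) ∧
    Real.log (n !) ≤ (n : ℝ) * Real.log n - n + 1 + Real.log n := by
  intro n hn
  induction n, hn using Nat.le_induction with
  | base => simp
  | succ n hn ih =>
    obtain ⟨ih1, ih2⟩ := ih
    have hn0 : (0:ℝ) < n := by exact_mod_cast hn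
    have hn1 : (0:ℝ) < (n:ℝ) + 1 := by linarith
    have hlog : Real.log ((n+1)! : ℕ) = Real.log (n ! : ℕ) + Real.log ((n:ℝ)+1) := by
      rw [Nat.factorial_succ]
      push_cast
      rw [Real.log_mul (by positivity) (by positivity)]
      ring
    have key1 : (n:ℝ) * (Real.log ((n:ℝ)+1) - Real.log n) ≤ 1 := by
      have h := Real.log_le_sub_one_of_pos (x := ((n:ℝ)+1)/n) (by positivity)
      rw [Real.log_div (by positivity) (by positivity)] at h
      have : ((n:ℝ)+1)/n - 1 = 1/n := by field_simp; ring
      rw [this] at h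
      calc (n:ℝ) * (Real.log ((n:ℝ)+1) - Real.log n) ≤ (n:ℝ) * (1/n) := by
            apply mul_le_mul_of_nonneg_left h (le_of_lt hn0)
        _ = 1 := by field_simp
    have key2 : 1 ≤ ((n:ℝ)+1) * (Real.log ((n:ℝ)+1) - Real.log n) := by
      have h := Real.log_le_sub_one_of_pos (x := (n:ℝ)/((n:ℝ)+1)) (by positivity)
      rw [Real.log_div (by positivity) (by positivity)] at h
      have : (n:ℝ)/((n:ℝ)+1) - 1 = -(1/((n:ℝ)+1)) := by field_simp; ring
      rw [this] at h
      have h' : 1/((n:ℝ)+1) ≤ Real.log ((n:ℝ)+1) - Real.log n := by linarith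
      calc (1:ℝ) = ((n:ℝ)+1) * (1/((n:ℝ)+1)) := by field_simp
        _ ≤ ((n:ℝ)+1) * (Real.log ((n:ℝ)+1) - Real.log n) :=
            mul_le_mul_of_nonneg_left h' (le_of_lt hn1)
    constructor
    · push_cast
      rw [hlog]
      nlinarith [key2]
    · push_cast
      rw [hlog]
      nlinarith [key1]


lemma theta_le (N : ℕ) :
    ∑ p ∈ (Finset.range (N+1)).filter Nat.Prime, Real.log p ≤ N * Real.log 4 := by
  have h1 : ∑ p ∈ (Finset.range (N+1)).filter Nat.Prime, Real.log p
      = Real.log (primorial N) := by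
    rw [primorial]
    push_cast
    rw [Real.log_prod]
    intro p hp
    simp only [mem_filter, mem_range] at hp
    exact_mod_cast hp.2.pos.ne'
  rw [h1]
  have h2 : (primorial N : ℝ) ≤ (4:ℝ) ^ N := by exact_mod_cast primorial_le_4_pow N
  calc Real.log (primorial N) ≤ Real.log ((4:ℝ)^N) := by
        apply Real.log_le_log (by exact_mod_cast primorial_pos N) h2
    _ = N * Real.log 4 := by rw [Real.log_pow]


lemma block_bound {m N : ℕ} (hm : 1 ≤ m) (hN : N ≤ 2*m) :
    ∑ p ∈ (Finset.Ioc m N).filter Nat.Prime, Real.log p / (p:ℝ)^2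
      ≤ 2 * Real.log 4 / m := by
  have hm0 : (0:ℝ) < m := by exact_mod_cast hm
  have step1 : ∑ p ∈ (Finset.Ioc m N).filter Nat.Prime, Real.log p / (p:ℝ)^2
      ≤ (∑ p ∈ (Finset.Ioc m N).filter Nat.Prime, Real.log p) / (m:ℝ)^2 := by
    rw [Finset.sum_div]
    apply Finset.sum_le_sum
    intro p hp
    simp only [mem_filter, mem_Ioc] at hp
    have hpm : (m:ℝ) ≤ (p:ℝ) := by exact_mod_cast le_of_lt hp.1.1
    have hlp : 0 ≤ Real.log p := Real.log_nonneg (by exact_mod_cast hp.2.one_lt.le)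
    apply div_le_div_of_nonneg_left hlp (by positivity)
    · nlinarith
  have step2 : ∑ p ∈ (Finset.Ioc m N).filter Nat.Prime, Real.log p
      ≤ N * Real.log 4 := by
    refine le_trans (Finset.sum_le_sum_of_subset_of_nonneg ?_ ?_) (theta_le N)
    · intro p hp
      simp only [mem_filter, mem_Ioc, mem_range] at hp ⊢
      exact ⟨Nat.lt_succ_of_le hp.1.2, hp.2⟩
    · intro p hp _
      simp only [mem_filter, mem_range] at hp
      exact Real.log_nonneg (by exact_mod_cast hp.2.one_lt.le)
  have hN' : (N:ℝ) ≤ 2*m := by exact_mod_cast hN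
  have hlog4 : 0 ≤ Real.log 4 := Real.log_nonneg (by norm_num)
  have step3 : (N:ℝ) * Real.log 4 / (m:ℝ)^2 ≤ 2 * Real.log 4 / m := by
    rw [div_le_div_iff₀ (by positivity) hm0]
    have h1 : (N:ℝ) * Real.log 4 ≤ 2*(m:ℝ) * Real.log 4 :=
      mul_le_mul_of_nonneg_right hN' hlog4
    nlinarith [mul_le_mul_of_nonneg_right h1 hm0.le]
  refine le_trans step1 (le_trans ?_ step3)
  exact div_le_div_of_nonneg_right step2 (by positivity) |>.trans_eq rfl

lemma dyadic_bound : ∀ d m N : ℕ, 1 ≤ m → N ≤ m + d →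
    ∑ p ∈ (Finset.Ioc m N).filter Nat.Prime, Real.log p / (p:ℝ)^2
      ≤ 4 * Real.log 4 / m := by
  intro d
  induction d using Nat.strong_induction_on with
  | _ d ih =>
    intro m N hm hN
    have hm0 : (0:ℝ) < m := by exact_mod_cast hm
    have hlog4 : 0 ≤ Real.log 4 := Real.log_nonneg (by norm_num)
    by_cases hN2 : N ≤ 2*m
    · refine le_trans (block_bound hm hN2) ?_
      gcongr
      linarith
    · push_neg at hN2
      have hsplit : Finset.Ioc m N = Finset.Ioc m (2*m) ∪ Finset.Ioc (2*m) N :=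
        (Finset.Ioc_union_Ioc_eq_Ioc (by omega) (by omega)).symm
      have hdisj : Disjoint ((Finset.Ioc m (2*m)).filter Nat.Prime)
          ((Finset.Ioc (2*m) N).filter Nat.Prime) := by
        apply Finset.disjoint_filter_filter
        simp only [Finset.disjoint_left, Finset.mem_Ioc]
        omega
      rw [hsplit, Finset.filter_union, Finset.sum_union hdisj]
      have h1 := block_bound hm (le_refl (2*m))
      have h2 := ih (d - m) (by omega) (2*m) N (by omega) (by omega)
      have h3 : 4 * Real.log 4 / (2*(m:ℝ)) = 2 * Real.log 4 / m := by
        field_simp; ring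
      push_cast at h2
      rw [h3] at h2
      calc _ ≤ 2 * Real.log 4 / m + 2 * Real.log 4 / m := add_le_add h1 h2
        _ = 4 * Real.log 4 / m := by ring


lemma prime_term_bound {n p : ℕ} (hp : p.Prime) (hn : 1 ≤ n) (h2 : p*p ≤ n) :
    0 ≤ (n:ℝ)/((p:ℝ)*((p:ℝ)-1)) - ∑ k ∈ Finset.Ico 2 (n+1), ((n / p^k : ℕ):ℝ) ∧
    (n:ℝ)/((p:ℝ)*((p:ℝ)-1)) - ∑ k ∈ Finset.Ico 2 (n+1), ((n / p^k : ℕ):ℝ)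
      ≤ (Nat.log p n : ℝ) + 1 := by
  set L := Nat.log p n with hLdef
  have hp1 : 1 < p := hp.one_lt
  have hn0 : n ≠ 0 := by omega
  have hL2 : 2 ≤ L := by
    rw [hLdef, Nat.le_log_iff_pow_le hp1 hn0]
    simpa [pow_two] using h2
  have hLn : L + 1 ≤ n + 1 := by
    have := Nat.log_le_self p n; omega
  -- split the sum
  have hsplit : ∑ k ∈ Finset.Ico 2 (n+1), ((n / p^k : ℕ):ℝ)
      = ∑ k ∈ Finset.Ico 2 (L+1), ((n / p^k : ℕ):ℝ) := by
    rw [← Finset.sum_Ico_consecutive _ (by omega : 2 ≤ L+1) hLn]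
    have : ∑ k ∈ Finset.Ico (L+1) (n+1), ((n / p^k : ℕ):ℝ) = 0 := by
      apply Finset.sum_eq_zero
      intro k hk
      simp only [Finset.mem_Ico] at hk
      have hpk : n < p^k := by
        calc n < p^(L+1) := Nat.lt_pow_succ_log_self hp1 n
          _ ≤ p^k := Nat.pow_le_pow_right (by omega) hk.1
      rw [Nat.div_eq_of_lt hpk]; simp
    rw [this, add_zero]
  rw [hsplit]
  -- real facts
  have hpR : (1:ℝ) < (p:ℝ) := by exact_mod_cast hp1
  set x : ℝ := 1/(p:ℝ) with hxdef
  have hx0 : 0 < x := by positivity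
  have hx1 : x < 1 := by rw [hxdef]; rw [div_lt_one (by linarith)]; linarith
  have hxne : x ≠ 1 := ne_of_lt hx1
  -- geometric identity
  have hgeom : ∑ k ∈ Finset.Ico 2 (L+1), (n:ℝ) * x^k
      = (n:ℝ)/((p:ℝ)*((p:ℝ)-1)) - (n:ℝ) * x^(L+1)/(1-x) := by
    have hpne : (p:ℝ) ≠ 0 := by positivity
    have hq : (p:ℝ) - 1 ≠ 0 := sub_ne_zero.mpr (ne_of_gt hpR)
    have hq2 : x - 1 ≠ 0 := sub_ne_zero.mpr hxne
    have hq3 : (1:ℝ) - x ≠ 0 := fun h => hq2 (by linarith [sub_eq_zero.mp h])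
    have hgs : ∑ k ∈ Finset.Ico 2 (L+1), x^k = (x^2 - x^(L+1))/(1-x) := by
      rw [geom_sum_Ico hxne (by omega), div_eq_div_iff hq2 hq3]
      ring
    have e1 : 1/((p:ℝ)*((p:ℝ)-1)) = x^2/(1-x) := by
      rw [hxdef]
      rw [div_eq_div_iff (by positivity) (by rw [← hxdef]; exact hq3)]
      field_simp
    rw [← Finset.mul_sum, hgs, div_eq_mul_one_div (n:ℝ), e1]
    field_simp
  -- pointwise facts
  have hpt : ∀ k ∈ Finset.Ico 2 (L+1),
      0 ≤ (n:ℝ) * x^k - ((n / p^k : ℕ):ℝ) ∧ (n:ℝ) * x^k - ((n / p^k : ℕ):ℝ) ≤ 1 := by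
    intro k hk
    have hpk0 : (0:ℝ) < (p:ℝ)^k := by positivity
    have hxk : (n:ℝ) * x^k = (n:ℝ) / (p:ℝ)^k := by
      rw [hxdef]; rw [div_pow]; ring
    constructor
    · rw [hxk, sub_nonneg]
      calc ((n / p^k : ℕ):ℝ) ≤ (n:ℝ)/((p^k:ℕ):ℝ) := Nat.cast_div_le
        _ = (n:ℝ)/(p:ℝ)^k := by push_cast; ring
    · rw [hxk]
      have h := Nat.lt_mul_div_succ n (Nat.pow_pos (by omega) : 0 < p^k)
      have h' : (n:ℝ) < (p:ℝ)^k * (((n / p^k : ℕ):ℝ) + 1) := by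
        exact_mod_cast h
      rw [sub_le_iff_le_add, div_le_iff₀ hpk0]
      nlinarith
  -- tail bound
  have htail0 : 0 ≤ (n:ℝ) * x^(L+1)/(1-x) := by
    apply div_nonneg (by positivity) (by linarith)
  have htail2 : (n:ℝ) * x^(L+1)/(1-x) ≤ 2 := by
    have hnp : (n:ℝ) < (p:ℝ)^(L+1) := by
      exact_mod_cast Nat.lt_pow_succ_log_self hp1 n
    have hxL : (n:ℝ) * x^(L+1) = (n:ℝ)/(p:ℝ)^(L+1) := by
      rw [hxdef, div_pow]; ring
    have h1 : (n:ℝ) * x^(L+1) ≤ 1 := by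
      rw [hxL, div_le_one (by positivity)]; linarith
    have h2' : (1:ℝ)/(1-x) ≤ 2 := by
      rw [div_le_iff₀ (by linarith)]
      have hp2 : (2:ℝ) ≤ p := by exact_mod_cast hp.two_le
      have hhalf : x ≤ 1/2 := by
        rw [hxdef, div_le_div_iff₀ (by linarith) (by norm_num)]
        linarith
      linarith
    calc (n:ℝ) * x^(L+1)/(1-x) = ((n:ℝ)*x^(L+1)) * (1/(1-x)) := by ring
      _ ≤ 1 * 2 := by
          apply mul_le_mul h1 h2' (div_nonneg zero_le_one (by linarith)) (by norm_num)
      _ = 2 := by norm_num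
  -- combine
  have hkey : (n:ℝ)/((p:ℝ)*((p:ℝ)-1)) - ∑ k ∈ Finset.Ico 2 (L+1), ((n / p^k : ℕ):ℝ)
      = (∑ k ∈ Finset.Ico 2 (L+1), ((n:ℝ) * x^k - ((n / p^k : ℕ):ℝ)))
        + (n:ℝ) * x^(L+1)/(1-x) := by
    rw [Finset.sum_sub_distrib, hgeom]; ring
  constructor
  · rw [hkey]
    apply add_nonneg (Finset.sum_nonneg fun k hk => (hpt k hk).1) htail0
  · rw [hkey]
    have hsum : ∑ k ∈ Finset.Ico 2 (L+1), ((n:ℝ) * x^k - ((n / p^k : ℕ):ℝ))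
        ≤ ∑ k ∈ Finset.Ico 2 (L+1), (1:ℝ) :=
      Finset.sum_le_sum fun k hk => (hpt k hk).2
    have hcard : ∑ k ∈ Finset.Ico 2 (L+1), (1:ℝ) = (L:ℝ) - 1 := by
      rw [Finset.sum_const, Nat.card_Ico]
      have : L + 1 - 2 = L - 1 := by omega
      rw [this]
      have : (↑(L-1) : ℝ) = (L:ℝ) - 1 := by
        have : 1 ≤ L := by omega
        push_cast [this]; ring
      simp [this]
    linarith


lemma log4_le_two : Real.log 4 ≤ 2 := by
  have h : (4:ℝ) = 2^2 := by norm_num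
  rw [h, Real.log_pow]
  have := Real.log_le_sub_one_of_pos (x := 2) (by norm_num)
  push_cast
  linarith

lemma natSqrt_le_sqrt (n : ℕ) : ((n.sqrt : ℕ) : ℝ) ≤ Real.sqrt n := by
  have h : ((n.sqrt : ℕ) : ℝ)^2 ≤ (n:ℝ) := by exact_mod_cast Nat.sqrt_le' n
  calc ((n.sqrt : ℕ) : ℝ) = Real.sqrt (((n.sqrt : ℕ) : ℝ)^2) :=
        (Real.sqrt_sq (by positivity)).symm
    _ ≤ Real.sqrt n := Real.sqrt_le_sqrt h

lemma log_le_six_rpow {n : ℕ} (hn : 1 ≤ n) : Real.log n ≤ 6 * (n:ℝ)^((1:ℝ)/6) := by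
  have hn0 : (0:ℝ) < n := by exact_mod_cast hn
  have h1 : Real.log ((n:ℝ)^((1:ℝ)/6)) = (1/6) * Real.log n := Real.log_rpow hn0 _
  have h2 : Real.log ((n:ℝ)^((1:ℝ)/6)) ≤ (n:ℝ)^((1:ℝ)/6) := by
    have := Real.log_le_sub_one_of_pos (x := (n:ℝ)^((1:ℝ)/6)) (by positivity)
    linarith [Real.rpow_nonneg hn0.le ((1:ℝ)/6)]
  linarith [h1 ▸ h2]

lemma log_le_two_sqrt {n : ℕ} (hn : 1 ≤ n) : Real.log n ≤ 2 * Real.sqrt n := by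
  have hn0 : (0:ℝ) < n := by exact_mod_cast hn
  have h1 : Real.log (Real.sqrt n) = Real.log n / 2 := Real.log_sqrt hn0.le
  have h2 := Real.log_le_sub_one_of_pos (x := Real.sqrt n) (Real.sqrt_pos.mpr hn0)
  have h3 : (0:ℝ) ≤ Real.sqrt n := Real.sqrt_nonneg _
  linarith

lemma psi_bound {n : ℕ} (hn : 1 ≤ n) :
    ∑ p ∈ (Finset.range (n.sqrt+1)).filter Nat.Prime,
      ((Nat.log p n : ℝ)+1) * Real.log p ≤ 18 * Real.sqrt n := by
  set R := n.sqrt with hR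
  have hn0 : (0:ℝ) < n := by exact_mod_cast hn
  have hn0' : n ≠ 0 := by omega
  set B := ⌊(n:ℝ)^((1:ℝ)/3)⌋₊ with hB
  -- pointwise bound
  have hpt : ∀ p ∈ (Finset.range (R+1)).filter Nat.Prime,
      ((Nat.log p n : ℝ)+1) * Real.log p ≤
        (if p^3 ≤ n then 2 * Real.log n else 3 * Real.log p) := by
    intro p hp
    simp only [mem_filter, mem_range] at hp
    obtain ⟨hpR, hpp⟩ := hp
    have hp1 : 1 < p := hpp.one_lt
    have hp2 : p*p ≤ n := by
      have h := Nat.sqrt_le' n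
      have : p ≤ R := by omega
      nlinarith
    have hL2 : 2 ≤ Nat.log p n := by
      rw [Nat.le_log_iff_pow_le hp1 hn0']
      simpa [pow_two] using hp2
    have hlogp : 0 ≤ Real.log p := Real.log_nonneg (by exact_mod_cast hp1.le)
    by_cases h3 : p^3 ≤ n
    · simp only [if_pos h3]
      have hL : (Nat.log p n : ℝ) * Real.log p ≤ Real.log n := by
        have hple : (p:ℝ)^(Nat.log p n) ≤ (n:ℝ) := by
          exact_mod_cast Nat.pow_log_le_self p hn0'
        calc (Nat.log p n : ℝ) * Real.log p = Real.log ((p:ℝ)^(Nat.log p n)) :=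
              (Real.log_pow _ _).symm
          _ ≤ Real.log n := Real.log_le_log (by positivity) hple
      have hL1 : (1:ℝ) ≤ (Nat.log p n : ℝ) := by exact_mod_cast le_trans (by norm_num) hL2
      nlinarith
    · simp only [if_neg h3]
      have hL3 : Nat.log p n ≤ 2 := by
        by_contra hcon
        exact h3 ((Nat.le_log_iff_pow_le hp1 hn0').mp (by omega))
      have : Nat.log p n = 2 := le_antisymm hL3 hL2
      rw [this]
      norm_num
  refine le_trans (Finset.sum_le_sum hpt) ?_
  rw [Finset.sum_ite]
  have hsub : ((Finset.range (R+1)).filter Nat.Prime).filter (fun p => p^3 ≤ n)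
      ⊆ Finset.Ioc 1 B := by
    intro p hp
    simp only [mem_filter, mem_range, mem_Ioc] at hp ⊢
    obtain ⟨⟨hpR, hpp⟩, h3⟩ := hp
    refine ⟨hpp.one_lt, ?_⟩
    have hc : ((p:ℝ))^(3:ℕ) ≤ (n:ℝ) := by exact_mod_cast h3
    have hple : (p:ℝ) ≤ (n:ℝ)^((1:ℝ)/3) := by
      have h1 : (p:ℝ) = ((p:ℝ)^(3:ℕ))^((1:ℝ)/3) := by
        rw [← Real.rpow_natCast (p:ℝ) 3, ← Real.rpow_mul (by positivity)]
        norm_num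
      rw [h1]
      exact Real.rpow_le_rpow (by positivity) hc (by norm_num)
    exact Nat.le_floor hple
  have hcard : (((Finset.range (R+1)).filter Nat.Prime).filter (fun p => p^3 ≤ n)).card
      ≤ B := le_trans (Finset.card_le_card hsub) (by simp [Nat.card_Ioc])
  have hBn : (B:ℝ) ≤ (n:ℝ)^((1:ℝ)/3) := Nat.floor_le (by positivity)
  have hlogn : 0 ≤ Real.log n := Real.log_nonneg (by exact_mod_cast hn)
  have hA : ∑ _p ∈ ((Finset.range (R+1)).filter Nat.Prime).filter (fun p => p^3 ≤ n),
      2 * Real.log n ≤ 12 * Real.sqrt n := by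
    rw [Finset.sum_const, nsmul_eq_mul]
    have h1 : ((((Finset.range (R+1)).filter Nat.Prime).filter (fun p => p^3 ≤ n)).card : ℝ)
        ≤ (n:ℝ)^((1:ℝ)/3) := le_trans (by exact_mod_cast hcard) hBn
    have h2 := log_le_six_rpow hn
    have hmul : (n:ℝ)^((1:ℝ)/3) * (n:ℝ)^((1:ℝ)/6) = Real.sqrt n := by
      rw [← Real.rpow_add hn0, Real.sqrt_eq_rpow]
      norm_num
    calc (↑(((Finset.range (R+1)).filter Nat.Prime).filter (fun p => p^3 ≤ n)).card)
          * (2 * Real.log n)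
        ≤ (n:ℝ)^((1:ℝ)/3) * (2 * (6 * (n:ℝ)^((1:ℝ)/6))) := by
          apply mul_le_mul h1 (by linarith) (by linarith) (by positivity)
      _ = 12 * ((n:ℝ)^((1:ℝ)/3) * (n:ℝ)^((1:ℝ)/6)) := by ring
      _ = 12 * Real.sqrt n := by rw [hmul]
  have hBpart : ∑ p ∈ ((Finset.range (R+1)).filter Nat.Prime).filter (fun p => ¬ p^3 ≤ n),
      3 * Real.log p ≤ 6 * Real.sqrt n := by
    have h1 : ∑ p ∈ ((Finset.range (R+1)).filter Nat.Prime).filter (fun p => ¬ p^3 ≤ n),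
        3 * Real.log p ≤ ∑ p ∈ (Finset.range (R+1)).filter Nat.Prime, 3 * Real.log p := by
      apply Finset.sum_le_sum_of_subset_of_nonneg (Finset.filter_subset _ _)
      intro p hp _
      simp only [mem_filter, mem_range] at hp
      have := Real.log_nonneg (by exact_mod_cast hp.2.one_lt.le : (1:ℝ) ≤ (p:ℝ))
      linarith
    have h2 : ∑ p ∈ (Finset.range (R+1)).filter Nat.Prime, 3 * Real.log p
        ≤ 3 * (R * Real.log 4) := by
      rw [← Finset.mul_sum]
      have := theta_le R
      linarith [theta_le R]
    have h3 : (R:ℝ) * Real.log 4 ≤ Real.sqrt n * 2 := by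
      apply mul_le_mul (natSqrt_le_sqrt n) log4_le_two
        (Real.log_nonneg (by norm_num)) (Real.sqrt_nonneg _)
    linarith
  linarith

noncomputable def Aux (p : ℕ) : ℝ :=
  if p.Prime then Real.log p / ((p:ℝ) * ((p:ℝ)-1)) else 0

lemma Aux_eq_zero {p : ℕ} (hp : ¬ p.Prime) : Aux p = 0 := by
  simp [Aux, hp]

lemma Aux_nonneg (p : ℕ) : 0 ≤ Aux p := by
  unfold Aux
  split_ifs with hp
  · have h2 : (2:ℝ) ≤ (p:ℝ) := by exact_mod_cast hp.two_le
    apply div_nonneg (Real.log_nonneg (by linarith)) (by nlinarith)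
  · exact le_refl 0

lemma Aux_le {p : ℕ} (hp : p.Prime) : Aux p ≤ 2 * Real.log p / (p:ℝ)^2 := by
  unfold Aux
  rw [if_pos hp]
  have h2 : (2:ℝ) ≤ (p:ℝ) := by exact_mod_cast hp.two_le
  have hlog : 0 ≤ Real.log p := Real.log_nonneg (by linarith)
  rw [div_le_div_iff₀ (by nlinarith) (by positivity)]
  nlinarith [mul_nonneg hlog (by nlinarith : (0:ℝ) ≤ (p:ℝ)*((p:ℝ)-2))]

lemma Aux_summable : Summable Aux := by
  refine Summable.of_nonneg_of_le Aux_nonneg (g := Aux)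
    (f := fun p : ℕ => 4 * (p:ℝ)^(-(3/2 : ℝ))) ?_
    ((Real.summable_nat_rpow.mpr (by norm_num)).mul_left 4)
  · intro p
    by_cases hp : p.Prime
    · have h2 : (2:ℝ) ≤ (p:ℝ) := by exact_mod_cast hp.two_le
      have hp0 : (0:ℝ) < p := by linarith
      have h1 : Aux p ≤ 2 * Real.log p / (p:ℝ)^2 := Aux_le hp
      have h2' : Real.log p ≤ 2 * Real.sqrt p := by
        have := Real.log_le_sub_one_of_pos (Real.sqrt_pos.mpr hp0)
        have hs := Real.log_sqrt hp0.le
        linarith [Real.sqrt_nonneg (p:ℝ)]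
      have h3 : 2 * Real.log p / (p:ℝ)^2 ≤ 4 * Real.sqrt p / (p:ℝ)^2 := by
        rw [div_le_div_iff₀ (by positivity) (by positivity)]
        nlinarith [mul_le_mul_of_nonneg_right h2' (sq_nonneg (p:ℝ))]
      have h4 : 4 * Real.sqrt p / (p:ℝ)^2 = 4 * (p:ℝ)^(-(3/2 : ℝ)) := by
        rw [Real.sqrt_eq_rpow]
        rw [mul_div_assoc, mul_eq_mul_left_iff]
        left
        rw [← Real.rpow_natCast (p:ℝ) 2, ← Real.rpow_sub hp0]
        norm_num
      linarith [h4 ▸ h3]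
    · simp only [Aux, if_neg hp]
      positivity

lemma cconst_eq : cconst = ∑' p : ℕ, Aux p := by
  have h := tsum_subtype {p : ℕ | p.Prime}
    (fun p => Real.log p / ((p:ℝ) * ((p:ℝ)-1)))
  unfold cconst
  rw [show (∑' p : {p : ℕ // p.Prime}, Real.log (p : ℕ) / (((p : ℕ) : ℝ) * (((p : ℕ) : ℝ) - 1)))
      = ∑' x : ↥{p : ℕ | p.Prime}, Real.log (x : ℕ) / (((x : ℕ) : ℝ) * (((x : ℕ) : ℝ) - 1)) from rfl]
  rw [h]
  apply tsum_congr
  intro p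
  simp [Set.indicator_apply, Aux, Set.mem_setOf_eq]


lemma tail_le {m : ℕ} (hm : 1 ≤ m) :
    ∑' x : ↥((↑(Finset.range (m+1)) : Set ℕ)ᶜ), Aux ↑x ≤ 8 * Real.log 4 / m := by
  apply Summable.tsum_le_of_sum_le (Aux_summable.subtype _)
  intro t
  have hinj : ∑ x ∈ t, Aux ↑x = ∑ p ∈ t.image (Subtype.val : _ → ℕ), Aux p := by
    rw [Finset.sum_image]
    intro x _ y _ h
    exact Subtype.coe_injective h
  set u := t.image (Subtype.val : _ → ℕ) with hu
  set N := u.sup id with hN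
  have hmem : ∀ p ∈ u, m < p ∧ p ≤ N := by
    intro p hp
    constructor
    · rw [hu, Finset.mem_image] at hp
      obtain ⟨x, _, rfl⟩ := hp
      have h2 := x.2
      simp only [Set.mem_compl_iff, Finset.coe_range, Set.mem_Iio] at h2
      omega
    · exact Finset.le_sup (f := id) hp
  have h1 : ∑ p ∈ u, Aux p = ∑ p ∈ u.filter Nat.Prime, Aux p := by
    rw [Finset.sum_filter_of_ne]
    intro p _ hne
    by_contra hpp
    exact hne (Aux_eq_zero hpp)
  have h2 : ∑ p ∈ u.filter Nat.Prime, Aux p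
      ≤ ∑ p ∈ u.filter Nat.Prime, 2 * Real.log p / (p:ℝ)^2 :=
    Finset.sum_le_sum fun p hp => Aux_le (Finset.mem_filter.mp hp).2
  have h3 : ∑ p ∈ u.filter Nat.Prime, 2 * Real.log p / (p:ℝ)^2
      ≤ ∑ p ∈ (Finset.Ioc m N).filter Nat.Prime, 2 * Real.log p / (p:ℝ)^2 := by
    apply Finset.sum_le_sum_of_subset_of_nonneg
    · intro p hp
      rw [Finset.mem_filter] at hp ⊢
      exact ⟨Finset.mem_Ioc.mpr (hmem p hp.1), hp.2⟩
    · intro p hp _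
      rw [Finset.mem_filter] at hp
      have := Real.log_nonneg (by exact_mod_cast hp.2.one_lt.le : (1:ℝ) ≤ (p:ℝ))
      positivity
  have h4 : ∑ p ∈ (Finset.Ioc m N).filter Nat.Prime, 2 * Real.log p / (p:ℝ)^2
      = 2 * ∑ p ∈ (Finset.Ioc m N).filter Nat.Prime, Real.log p / (p:ℝ)^2 := by
    rw [Finset.mul_sum]
    apply Finset.sum_congr rfl
    intro p _
    ring
  have h5 := dyadic_bound N m N hm (by omega)
  have hcomp : ∑ i ∈ t, (Aux ∘ Subtype.val) i = ∑ x ∈ t, Aux ↑x := rfl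
  rw [hcomp, hinj, h1]
  calc _ ≤ _ := h2
    _ ≤ _ := h3
    _ = _ := h4
    _ ≤ 2 * (4 * Real.log 4 / m) := by linarith
    _ = 8 * Real.log 4 / m := by ring

lemma cconst_split (m : ℕ) :
    ∑' p : ℕ, Aux p = ∑ p ∈ Finset.range (m+1), Aux p
      + ∑' x : ↥((↑(Finset.range (m+1)) : Set ℕ)ᶜ), Aux ↑x :=
  (Summable.sum_add_tsum_compl (s := Finset.range (m+1)) Aux_summable).symm


lemma rho_eq (n : ℕ) :
    rho n = ∏ p ∈ (Finset.range (n+1)).filter Nat.Prime, p ^ (n / p) := by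
  unfold rho
  have hsupp : ∀ p : ℕ, p.Prime → (p ^ (n / p) ≠ 1) → p ≤ n := by
    intro p hp hne
    by_contra h
    push_neg at h
    rw [Nat.div_eq_of_lt h, pow_zero] at hne
    exact hne rfl
  have hfin : ({p : ℕ | p.Prime} ∩ Function.mulSupport fun p => p ^ (n / p)).Finite := by
    apply Set.Finite.subset (Set.finite_Icc 0 n)
    rintro p ⟨hp, hs⟩
    simp only [Set.mem_Icc]
    exact ⟨Nat.zero_le p, hsupp p hp hs⟩
  rw [finprod_mem_eq_prod _ hfin]
  apply Finset.prod_subset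
  · intro p hp
    rw [Set.Finite.mem_toFinset] at hp
    obtain ⟨hp1, hp2⟩ := hp
    simp only [mem_filter, mem_range]
    exact ⟨Nat.lt_succ_of_le (hsupp p hp1 hp2), hp1⟩
  · intro p hp hnp
    by_contra hne
    apply hnp
    rw [Set.Finite.mem_toFinset]
    exact ⟨(Finset.mem_filter.mp hp).2, hne⟩

lemma factorial_eq (n : ℕ) :
    (n !) = ∏ p ∈ (Finset.range (n+1)).filter Nat.Prime,
      p ^ (∑ k ∈ Finset.Ico 1 (n+1), n / p^k) := by
  conv_lhs => rw [← Nat.factorization_prod_pow_eq_self (Nat.factorial_ne_zero n)]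
  rw [Finsupp.prod_of_support_subset _ ?_ (fun p e => p ^ e) (fun i _ => pow_zero i)]
  · apply Finset.prod_congr rfl
    intro p hp
    simp only [mem_filter, mem_range] at hp
    haveI : Fact p.Prime := ⟨hp.2⟩
    rw [Nat.factorization_def _ hp.2,
      padicValNat_factorial (Nat.lt_succ_of_le (Nat.log_le_self p n))]
  · rw [Nat.support_factorization]
    intro q hq
    rw [Nat.mem_primeFactors] at hq
    obtain ⟨hq1, hq2, _⟩ := hq
    simp only [mem_filter, mem_range]
    exact ⟨Nat.lt_succ_of_le ((Nat.Prime.dvd_factorial hq1).mp hq2), hq1⟩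


lemma log_prod_pow (s : Finset ℕ) (hs : ∀ p ∈ s, p.Prime) (e : ℕ → ℕ) :
    Real.log ((∏ p ∈ s, p ^ (e p) : ℕ) : ℝ) = ∑ p ∈ s, (e p : ℝ) * Real.log p := by
  push_cast
  rw [Real.log_prod]
  · apply Finset.sum_congr rfl
    intro p hp
    rw [Real.log_pow]
  · intro p hp
    have := (hs p hp).pos
    positivity

lemma log_factorial_split {n : ℕ} (hn : 1 ≤ n) :
    Real.log (n !) = Real.log (rho n)
      + ∑ p ∈ (Finset.range (n.sqrt+1)).filter Nat.Prime,
          (∑ k ∈ Finset.Ico 2 (n+1), ((n / p^k : ℕ):ℝ)) * Real.log p := by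
  have hprime : ∀ p ∈ (Finset.range (n+1)).filter Nat.Prime, p.Prime :=
    fun p hp => (Finset.mem_filter.mp hp).2
  have h1 : Real.log (n !) = ∑ p ∈ (Finset.range (n+1)).filter Nat.Prime,
      ((∑ k ∈ Finset.Ico 1 (n+1), n / p^k : ℕ) : ℝ) * Real.log p := by
    rw [factorial_eq n]
    exact log_prod_pow _ hprime _
  have h2 : Real.log (rho n) = ∑ p ∈ (Finset.range (n+1)).filter Nat.Prime,
      ((n / p : ℕ) : ℝ) * Real.log p := by
    rw [rho_eq n]
    exact log_prod_pow _ hprime _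
  have h3 : ∀ p ∈ (Finset.range (n+1)).filter Nat.Prime,
      ((∑ k ∈ Finset.Ico 1 (n+1), n / p^k : ℕ) : ℝ) * Real.log p
        = ((n / p : ℕ) : ℝ) * Real.log p
          + (∑ k ∈ Finset.Ico 2 (n+1), ((n / p^k : ℕ):ℝ)) * Real.log p := by
    intro p hp
    rw [Finset.sum_eq_sum_Ico_succ_bot (by omega : 1 < n+1)]
    push_cast
    rw [pow_one]
    ring
  rw [h1, Finset.sum_congr rfl h3, Finset.sum_add_distrib, ← h2]
  congr 1
  symm
  apply Finset.sum_subset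
  · intro p hp
    simp only [mem_filter, mem_range] at hp ⊢
    have := Nat.sqrt_le_self n
    exact ⟨by omega, hp.2⟩
  · intro p hp hnp
    simp only [mem_filter, mem_range] at hp hnp
    have hpR : n.sqrt < p := by
      by_contra h
      push_neg at h
      exact hnp ⟨by omega, hp.2⟩
    have hp2 : n < p^2 := Nat.sqrt_lt'.mp hpR
    have hz : ∀ k ∈ Finset.Ico 2 (n+1), ((n / p^k : ℕ):ℝ) = 0 := by
      intro k hk
      simp only [Finset.mem_Ico] at hk
      have : n < p^k := lt_of_lt_of_le hp2 (Nat.pow_le_pow_right hp.2.pos hk.1)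
      rw [Nat.div_eq_of_lt this]
      simp
    rw [Finset.sum_eq_zero hz, zero_mul]



/-- **Theorem 3.** With `c := ∑_{p prime} (log p)/(p(p-1))`, we have
`log ρ n = n log n − (c + 1) n + O(√n)`: there is `M > 0` such that for every positive
integer `n`, `|log ρ n − n log n + (c + 1) n| ≤ M √n`. -/
theorem log_rho_estimate :
    ∃ M : ℝ, 0 < M ∧ ∀ n : ℕ, 0 < n →
      |Real.log (rho n) - n * Real.log n + (cconst + 1) * n| ≤ M * Real.sqrt n := by
  refine ⟨85, by norm_num, ?_⟩
  intro n hn'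
  have hn : 1 ≤ n := hn'
  have hn0 : (0:ℝ) < n := by exact_mod_cast hn
  set R := n.sqrt with hR
  have hR1 : 1 ≤ R := by
    rw [hR]
    have := Nat.sqrt_pos.mpr hn'
    omega
  have hR0 : (0:ℝ) < (R:ℝ) := by exact_mod_cast hR1
  set P := (Finset.range (R+1)).filter Nat.Prime with hP
  set S2 : ℕ → ℝ := fun p => ∑ k ∈ Finset.Ico 2 (n+1), ((n / p^k : ℕ):ℝ) with hS2
  set g : ℕ → ℝ := fun p => Real.log p / ((p:ℝ) * ((p:ℝ)-1)) with hg
  set tail := ∑' x : ↥((↑(Finset.range (R+1)) : Set ℕ)ᶜ), Aux ↑x with htail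
  set D := ∑ p ∈ P, S2 p * Real.log p with hD
  set G := ∑ p ∈ P, Real.log p * ((n:ℝ)/((p:ℝ)*((p:ℝ)-1)) - S2 p) with hG
  -- cconst split
  have hcs : cconst = ∑ p ∈ P, g p + tail := by
    rw [cconst_eq, cconst_split R]
    congr 1
    rw [hP, Finset.sum_filter]
    apply Finset.sum_congr rfl
    intro p _
    simp [Aux, hg]
  -- log rho identity
  have hrho : Real.log (rho n) = Real.log (n !) - D := by
    rw [log_factorial_split hn]
    rw [hD, hP, hS2, hR]
    ring
  -- pointwise facts on P
  have hPfact : ∀ p ∈ P, p.Prime ∧ p*p ≤ n := by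
    intro p hp
    rw [hP, Finset.mem_filter, Finset.mem_range] at hp
    refine ⟨hp.2, ?_⟩
    have h := Nat.sqrt_le' n
    have : p ≤ R := by omega
    nlinarith
  -- G bounds
  have hG0 : 0 ≤ G := by
    rw [hG]
    apply Finset.sum_nonneg
    intro p hp
    obtain ⟨hpp, hp2⟩ := hPfact p hp
    exact mul_nonneg (Real.log_nonneg (by exact_mod_cast hpp.one_lt.le))
      (prime_term_bound hpp hn hp2).1
  have hGle : G ≤ 18 * Real.sqrt n := by
    have h1 : G ≤ ∑ p ∈ P, ((Nat.log p n : ℝ)+1) * Real.log p := by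
      rw [hG]
      apply Finset.sum_le_sum
      intro p hp
      obtain ⟨hpp, hp2⟩ := hPfact p hp
      have h2 := mul_le_mul_of_nonneg_left (prime_term_bound hpp hn hp2).2
        (Real.log_nonneg (by exact_mod_cast hpp.one_lt.le : (1:ℝ) ≤ (p:ℝ)))
      calc Real.log p * ((n:ℝ)/((p:ℝ)*((p:ℝ)-1)) - S2 p)
          ≤ Real.log p * ((Nat.log p n : ℝ) + 1) := h2
        _ = ((Nat.log p n : ℝ)+1) * Real.log p := by ring
    exact le_trans h1 (psi_bound hn)
  -- tail bounds
  have htail0 : 0 ≤ tail := tsum_nonneg (fun x => Aux_nonneg _)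
  have hn4R : (n:ℝ) ≤ 4 * (R:ℝ)^2 := by
    have h := Nat.lt_succ_sqrt n
    have h' : (n:ℝ) < ((R:ℝ)+1) * ((R:ℝ)+1) := by
      rw [hR]
      exact_mod_cast h
    have hR1' : (1:ℝ) ≤ (R:ℝ) := by exact_mod_cast hR1
    nlinarith
  have htailn : (n:ℝ) * tail ≤ 64 * Real.sqrt n := by
    have h1 : tail ≤ 8 * Real.log 4 / R := tail_le hR1
    have h2 : (n:ℝ) * tail ≤ (n:ℝ) * (8 * Real.log 4 / R) :=
      mul_le_mul_of_nonneg_left h1 hn0.le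
    have hlog4 : 0 ≤ Real.log 4 := Real.log_nonneg (by norm_num)
    have h3 : (n:ℝ) * (8 * Real.log 4 / R) ≤ 64 * (R:ℝ) := by
      rw [mul_div_assoc', div_le_iff₀ hR0]
      nlinarith [mul_le_mul_of_nonneg_left log4_le_two hn0.le]
    have h4 : (R:ℝ) ≤ Real.sqrt n := natSqrt_le_sqrt n
    linarith
  -- Stirling part
  obtain ⟨hf1, hf2⟩ := log_fact_bounds n hn
  have hsq1 : (1:ℝ) ≤ Real.sqrt n := by
    rw [show (1:ℝ) = Real.sqrt 1 by simp]
    exact Real.sqrt_le_sqrt (by exact_mod_cast hn)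
  have hlogn : Real.log n ≤ 2 * Real.sqrt n := log_le_two_sqrt hn
  -- key algebraic identity
  have hGD : G = (∑ p ∈ P, g p) * (n:ℝ) - D := by
    rw [hG, hD, Finset.sum_mul, ← Finset.sum_sub_distrib]
    apply Finset.sum_congr rfl
    intro p _
    rw [hg]
    ring
  have hkey : Real.log (rho n) - n * Real.log n + (cconst + 1) * n
      = (Real.log (n !) - n * Real.log n + n) + (G + (n:ℝ) * tail) := by
    rw [hrho, hcs, hGD]
    ring
  rw [hkey]
  have hE1a : (1:ℝ) ≤ Real.log (n !) - n * Real.log n + n := by linarith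
  have hE1b : Real.log (n !) - n * Real.log n + n ≤ 1 + Real.log n := by linarith
  have habs : |Real.log (n !) - n * Real.log n + n + (G + (n:ℝ) * tail)|
      = Real.log (n !) - n * Real.log n + n + (G + (n:ℝ) * tail) := by
    apply abs_of_nonneg
    have := mul_nonneg hn0.le htail0
    linarith
  rw [habs]
  have hnt : 0 ≤ (n:ℝ) * tail := mul_nonneg hn0.le htail0
  linarith
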